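/- The entrywise ceiling map from probabilistic to possibilistic matrices is a monotone of distinguishability orderings: if x, y are stochastic matrices and y = t x for some stochastic matrix t, then ceil(y) = ceil(t) · ceil(x) where the product on the right is taken in the Boolean semiring; in particular, whenever no Boolean-stochastic matrix u satisfies ceil(y) = u · ceil(x) over the Boolean semiring, then no stochastic t with y = t x exists. -/

import Mathlib

/-- The entrywise ceiling map (sending an entry to `1` iff it is nonzero, here
represented by the proposition `≠ 0`) from probabilistic to possibilistic matrices is
a monotone of distinguishability orderings: if `y = t * x` for stochastic matrices,
then `ceil y = ceil t ⬝ ceil x` over the Boolean semiring (where the Boolean matrix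
product of `u` and `v` has `(i,j)` entry `∃ k, u i k ∧ v k j`); in particular, if no
Boolean-stochastic matrix `u` (every column containing at least one `1`) satisfies
`ceil y = u ⬝ ceil x`, then no stochastic `t` with `y = t * x` exists. -/
theorem ceiling_monotone_possibilistic {n m h : ℕ}
    (x : Matrix (Fin n) (Fin h) ℝ) (y : Matrix (Fin m) (Fin h) ℝ)
    (hx_nonneg : ∀ i j, 0 ≤ x i j) (hx_col : ∀ j, ∑ i, x i j = 1)
    (hy_nonneg : ∀ i j, 0 ≤ y i j) (hy_col : ∀ j, ∑ i, y i j = 1) :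
    (∀ t : Matrix (Fin m) (Fin n) ℝ, (∀ i j, 0 ≤ t i j) → (∀ j, ∑ i, t i j = 1) →
      y = t * x → ∀ i j, (y i j ≠ 0 ↔ ∃ k, t i k ≠ 0 ∧ x k j ≠ 0)) ∧
    ((¬ ∃ u : Fin m → Fin n → Prop, (∀ j, ∃ i, u i j) ∧
        ∀ i j, (y i j ≠ 0 ↔ ∃ k, u i k ∧ x k j ≠ 0)) →
      ¬ ∃ t : Matrix (Fin m) (Fin n) ℝ,
        (∀ i j, 0 ≤ t i j) ∧ (∀ j, ∑ i, t i j = 1) ∧ y = t * x) := by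

  have main : ∀ t : Matrix (Fin m) (Fin n) ℝ, (∀ i j, 0 ≤ t i j) → (∀ j, ∑ i, t i j = 1) →
      y = t * x → ∀ i j, (y i j ≠ 0 ↔ ∃ k, t i k ≠ 0 ∧ x k j ≠ 0) := by
    intro t ht_nonneg ht_col hyt i j
    have hij : y i j = ∑ k, t i k * x k j := by rw [hyt]; rfl
    constructor
    · intro hne
      by_contra hc
      push_neg at hc
      apply hne
      rw [hij]
      apply Finset.sum_eq_zero
      intro k _
      rcases eq_or_ne (t i k) 0 with h0 | h0
      · rw [h0, zero_mul]
      · rw [hc k h0, mul_zero]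
    · rintro ⟨k, htk, hxk⟩
      rw [hij]
      have hpos : 0 < t i k * x k j :=
        mul_pos ((ht_nonneg i k).lt_of_ne (Ne.symm htk)) ((hx_nonneg k j).lt_of_ne (Ne.symm hxk))
      have : 0 < ∑ k, t i k * x k j :=
        Finset.sum_pos' (fun l _ => mul_nonneg (ht_nonneg i l) (hx_nonneg l j))
          ⟨k, Finset.mem_univ k, hpos⟩
      exact ne_of_gt this
  refine ⟨main, fun hno ⟨t, ht_nonneg, ht_col, hyt⟩ => hno ?_⟩
  refine ⟨fun i k => t i k ≠ 0, fun j => ?_, main t ht_nonneg ht_col hyt⟩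
  by_contra hc
  push_neg at hc
  have : ∑ i, t i j = 0 := Finset.sum_eq_zero fun i _ => hc i
  rw [ht_col j] at this
  exact one_ne_zero this
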